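/- arXiv:2304.08734 — 2 statements merged into one kernel-verified Lean document; each statement's English description precedes it below -/
import Mathlib

section
/- For every integer m ≥ 1, the (m+1)×(m+1) tridiagonal matrix T^m with diagonal entries T^m_{ll} = (l+1)(m+1) for 0 ≤ l ≤ m−1 and T^m_{mm} = (m+1)², superdiagonal entries T^m_{l,l+1} = (l+1)(l+2) for 0 ≤ l ≤ m−1, and subdiagonal entries T^m_{l,l−1} = m(m+2)/4 for 1 ≤ l ≤ m, is invertible. -/
noncomputable def stmt7F (m k : ℕ) : ℝ := (((m:ℝ)+2)/2)^(k+1) - ((m:ℝ)/2)^(k+1)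

lemma stmt7F_pos (m k : ℕ) : 0 < stmt7F m k := by
  have h : ((m:ℝ)/2) < ((m:ℝ)+2)/2 := by linarith
  have h0 : (0:ℝ) ≤ (m:ℝ)/2 := by positivity
  exact sub_pos.mpr (pow_lt_pow_left₀ h h0 (Nat.succ_ne_zero k))

lemma stmt7F_rec (m k : ℕ) :
    stmt7F m (k+2) = ((m:ℝ)+1) * stmt7F m (k+1) - ((m:ℝ)*((m:ℝ)+2)/4) * stmt7F m k := by
  unfold stmt7F; ring

noncomputable def stmt7u (m l : ℕ) : ℝ := ((l:ℝ)+1) * stmt7F m (l+1) / stmt7F m l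

lemma stmt7u_pos (m l : ℕ) : 0 < stmt7u m l := by
  unfold stmt7u
  have := stmt7F_pos m l
  have := stmt7F_pos m (l+1)
  positivity

lemma stmt7u_rec (m n : ℕ) :
    ((m:ℝ)*((m:ℝ)+2)/4) / stmt7u m n * (((n:ℝ)+1)*((n:ℝ)+2)) + stmt7u m (n+1)
      = ((n:ℝ)+2)*((m:ℝ)+1) := by
  have h0 := (stmt7F_pos m n).ne'
  have h1 := (stmt7F_pos m (n+1)).ne'
  unfold stmt7u
  rw [show n+1+1 = n+2 from rfl, stmt7F_rec]
  push_cast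
  field_simp
  ring

lemma stmt7u_zero (m : ℕ) : stmt7u m 0 = (m:ℝ)+1 := by
  unfold stmt7u stmt7F
  norm_num
  ring

noncomputable def stmt7U (m : ℕ) : Matrix (Fin (m+1)) (Fin (m+1)) ℝ :=
  Matrix.of fun l j =>
    if (l:ℕ) = (j:ℕ) then stmt7u m l
    else if (j:ℕ) = (l:ℕ)+1 then ((l:ℕ)+1:ℝ)*((l:ℕ)+2:ℝ) else 0

noncomputable def stmt7N (m : ℕ) : Matrix (Fin (m+1)) (Fin (m+1)) ℝ :=
  Matrix.of fun l j =>
    if (l:ℕ) = (j:ℕ)+1 then ((m:ℝ)*((m:ℝ)+2)/4) / stmt7u m j else 0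


/-- For every integer `m ≥ 1`, the `(m+1)×(m+1)` tridiagonal matrix `Tᵐ`
with diagonal `(l+1)(m+1)` for `0 ≤ l ≤ m−1` and `(m+1)²` in position `(m,m)`,
superdiagonal `(l+1)(l+2)`, and subdiagonal `m(m+2)/4`, is invertible. -/
theorem stmt7 (m : ℕ) (hm : 1 ≤ m)
    (T : Matrix (Fin (m + 1)) (Fin (m + 1)) ℝ)
    (hT : ∀ l j : Fin (m + 1),
      T l j =
        if l = j then
          (if (l : ℕ) = m then ((m : ℝ) + 1) ^ 2 else ((l : ℕ) + 1 : ℝ) * ((m : ℝ) + 1))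
        else if (j : ℕ) = (l : ℕ) + 1 then ((l : ℕ) + 1 : ℝ) * ((l : ℕ) + 2 : ℝ)
        else if (l : ℕ) = (j : ℕ) + 1 then (m : ℝ) * ((m : ℝ) + 2) / 4
        else 0) :
    IsUnit T := by
  have hLU : T = (1 + stmt7N m) * stmt7U m := by
    ext l j
    rw [Matrix.add_mul, Matrix.one_mul, Matrix.add_apply, Matrix.mul_apply, hT]
    simp only [stmt7N, stmt7U, Matrix.of_apply, Fin.ext_iff]
    rcases Nat.eq_zero_or_eq_succ_pred (l:ℕ) with hl | hl
    · rw [Finset.sum_eq_zero (fun k _ => by rw [if_neg (by omega), zero_mul]), add_zero]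
      split_ifs <;> first
        | rfl
        | omega
        | (rw [hl, stmt7u_zero]; norm_num)
    · set n := (l:ℕ) - 1 with hn
      have hl' : (l:ℕ) = n + 1 := hl
      have hnlt : n < m + 1 := by omega
      have key := stmt7u_rec m n
      have hsum : (∑ k : Fin (m+1),
          (if (l:ℕ) = (k:ℕ)+1 then ((m:ℝ)*((m:ℝ)+2)/4) / stmt7u m (k:ℕ) else 0) *
          (if (k:ℕ) = (j:ℕ) then stmt7u m (k:ℕ)
            else if (j:ℕ) = (k:ℕ)+1 then (((k:ℕ):ℝ)+1)*(((k:ℕ):ℝ)+2) else 0))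
          = (((m:ℝ)*((m:ℝ)+2)/4) / stmt7u m n) *
          (if n = (j:ℕ) then stmt7u m n
            else if (j:ℕ) = n+1 then (((n:ℕ):ℝ)+1)*(((n:ℕ):ℝ)+2) else 0) := by
        rw [Finset.sum_eq_single (⟨n, hnlt⟩ : Fin (m+1))]
        · rw [if_pos hl']
        · intro b _ hb
          rw [if_neg (by simp only [ne_eq, Fin.ext_iff] at hb; omega), zero_mul]
        · intro h; exact absurd (Finset.mem_univ _) h
      rw [hsum]
      have hmlast : ((l:ℕ) = m) → ((m:ℝ)+1)^2 = (((n:ℝ)+1)+1)*((m:ℝ)+1) := by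
        intro h
        have h2 : (m:ℝ) = (n:ℝ)+1 := by
          have : m = n+1 := by omega
          rw [this]; push_cast; ring
        rw [h2]; ring
      split_ifs with h1 h2 h3 h4 h5 h6 <;> first
        | omega
        | (rw [mul_zero, add_zero]; try rw [hl']; push_cast; try ring)
        | (rw [zero_add, div_mul_cancel₀ _ (stmt7u_pos m n).ne'])
        | (rw [hmlast (by omega), hl']; push_cast; linarith [key])
        | (rw [hl']; push_cast; linarith [key])
        | (rw [mul_zero, add_zero])
  rw [hLU]
  have hN : IsUnit (1 + stmt7N m) := by
    rw [Matrix.isUnit_iff_isUnit_det,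
      Matrix.det_of_lowerTriangular _ (fun i j hij => by
        have hij' : (i:ℕ) < (j:ℕ) := by simpa using hij
        simp only [Matrix.add_apply, stmt7N, Matrix.of_apply]
        rw [Matrix.one_apply_ne (Fin.ne_of_lt (by exact Fin.lt_def.mpr hij')), zero_add,
          if_neg (by omega)])]
    rw [Finset.prod_congr rfl (fun i _ => show (1 + stmt7N m) i i = 1 by
      simp only [Matrix.add_apply, Matrix.one_apply_eq, stmt7N, Matrix.of_apply]
      rw [if_neg (by omega), add_zero])]
    simp
  have hU : IsUnit (stmt7U m) := by
    rw [Matrix.isUnit_iff_isUnit_det,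
      Matrix.det_of_upperTriangular (M := stmt7U m) (fun i j hij => by
        have hij' : (j:ℕ) < (i:ℕ) := hij
        simp only [stmt7U, Matrix.of_apply]
        rw [if_neg (by omega), if_neg (by omega)])]
    rw [Finset.prod_congr rfl (fun i _ => show stmt7U m i i = stmt7u m i by
      simp [stmt7U])]
    exact isUnit_iff_ne_zero.mpr (Finset.prod_ne_zero_iff.mpr (fun i _ => (stmt7u_pos m i).ne'))
  exact hN.mul hU
end

section
/- Let γ ≤ 1, 0 < α < min{2/(2−γ), 1}, λ, Λ > 0 with λ ≤ Λ, and set K = ( (λ/(2Λ))·(1 − (2−γ)α/2) )^{2/(2−γ)}. Then K ∈ (0,1), and for any constant C > 0 and any measurable functions a^{nn}, b^n, c on (0,K) with λ ≤ a^{nn} ≤ Λ, |b^n| ≤ Λ, c ≤ 0, the function w(z) = C z^{(2−γ)α/2} satisfies, for all z ∈ (0,K): ((2−γ)α/2)·((2−γ)α/2 − 1)·a^{nn}(z)·z^{(2−γ)(α−2)/2} + ((2−γ)α/2)·b^n(z)·z^{(2−γ)(α−1)/2} + c(z)·z^{(2−γ)α/2} ≤ (C(2−γ)αλ/4)·((2−γ)α/2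 − 1)·z^{(2−γ)(α−2)/2} < 0. -/
open Set

/-- one-dimensional supersolution barrier: with
`K = ((λ/(2Λ))(1 − (2−γ)α/2))^(2/(2−γ))` one has `K ∈ (0,1)`, and for any `C > 0`
and coefficients `λ ≤ aⁿⁿ ≤ Λ`, `|bⁿ| ≤ Λ`, `c ≤ 0` on `(0,K)`, the function
`w(z) = C z^((2−γ)α/2)` satisfies the stated strictly negative supersolution inequality. -/
theorem stmt12 (γ α lam Lam : ℝ) (hγ : γ ≤ 1)
    (hα0 : 0 < α) (hα : α < min (2 / (2 - γ)) 1)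
    (hlam : 0 < lam) (hlamLam : lam ≤ Lam)
    (K : ℝ) (hK : K = ((lam / (2 * Lam)) * (1 - (2 - γ) * α / 2)) ^ (2 / (2 - γ))) :
    (0 < K ∧ K < 1) ∧
    ∀ C : ℝ, 0 < C → ∀ a b c : ℝ → ℝ,
      (∀ z ∈ Ioo (0:ℝ) K, lam ≤ a z ∧ a z ≤ Lam ∧ |b z| ≤ Lam ∧ c z ≤ 0) →
      ∀ z ∈ Ioo (0:ℝ) K,
        C * (((2 - γ) * α / 2) * ((2 - γ) * α / 2 - 1) * a z * z ^ ((2 - γ) * (α - 2) / 2)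
            + ((2 - γ) * α / 2) * b z * z ^ ((2 - γ) * (α - 1) / 2)
            + c z * z ^ ((2 - γ) * α / 2))
          ≤ (C * (2 - γ) * α * lam / 4) * ((2 - γ) * α / 2 - 1) * z ^ ((2 - γ) * (α - 2) / 2)
        ∧ (C * (2 - γ) * α * lam / 4) * ((2 - γ) * α / 2 - 1) * z ^ ((2 - γ) * (α - 2) / 2)
            < 0 := by
  have hq : (0:ℝ) < 2 - γ := by linarith
  have hLam : 0 < Lam := lt_of_lt_of_le hlam hlamLam
  have hβ0 : 0 < (2 - γ) * α / 2 := by positivity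
  have hβ1 : (2 - γ) * α / 2 < 1 := by
    have h1 : α < 2 / (2 - γ) := lt_of_lt_of_le hα (min_le_left _ _)
    have h2 : α * (2 - γ) < 2 := (lt_div_iff₀ hq).mp h1
    nlinarith
  set base : ℝ := (lam / (2 * Lam)) * (1 - (2 - γ) * α / 2) with hbase
  clear_value base
  have hbase0 : 0 < base := by
    have : 0 < 1 - (2 - γ) * α / 2 := by linarith
    rw [hbase]; positivity
  have hbase1 : base < 1 := by
    have h1 : lam / (2 * Lam) ≤ 1 / 2 := by
      rw [div_le_iff₀ (by positivity)]; linarith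
    have h2 : 0 < 1 - (2 - γ) * α / 2 := by linarith
    rw [hbase]; nlinarith [div_pos hlam (by positivity : (0:ℝ) < 2*Lam)]
  have hK0 : 0 < K := by rw [hK]; exact Real.rpow_pos_of_pos hbase0 _
  have hK1 : K < 1 := by
    rw [hK]; exact Real.rpow_lt_one hbase0.le hbase1 (by positivity)
  refine ⟨⟨hK0, hK1⟩, ?_⟩
  intro C hC a b c hcoef z hz
  obtain ⟨hz0, hzK⟩ := hz
  obtain ⟨hA1, hA2, hB, hCc⟩ := hcoef z ⟨hz0, hzK⟩
  have hPpos : 0 < z ^ ((2 - γ) * (α - 2) / 2) := Real.rpow_pos_of_pos hz0 _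
  have hQpos : 0 < z ^ ((2 - γ) / 2) := Real.rpow_pos_of_pos hz0 _
  have hRpos : 0 < z ^ (2 - γ) := Real.rpow_pos_of_pos hz0 _
  have hQbase : z ^ ((2 - γ) / 2) < base := by
    have h1 : z ^ ((2 - γ) / 2) < K ^ ((2 - γ) / 2) :=
      Real.rpow_lt_rpow hz0.le hzK (by positivity)
    have h2 : K ^ ((2 - γ) / 2) = base := by
      rw [hK, ← Real.rpow_mul hbase0.le]
      rw [show (2 / (2 - γ)) * ((2 - γ) / 2) = 1 by field_simp]
      exact Real.rpow_one _
    rwa [h2] at h1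
  -- power splitting
  have hP2 : z ^ ((2 - γ) * (α - 1) / 2)
      = z ^ ((2 - γ) * (α - 2) / 2) * z ^ ((2 - γ) / 2) := by
    rw [← Real.rpow_add hz0]; ring_nf
  have hP3 : z ^ ((2 - γ) * α / 2)
      = z ^ ((2 - γ) * (α - 2) / 2) * z ^ (2 - γ) := by
    rw [← Real.rpow_add hz0]; ring_nf
  have hbase' : base = (lam / (2 * Lam)) * (1 - (2 - γ) * α / 2) := hbase
  have hP2' := hP2
  have hP3' := hP3
  set β : ℝ := (2 - γ) * α / 2 with hβ
  set P : ℝ := z ^ ((2 - γ) * (α - 2) / 2) with hP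
  set Q : ℝ := z ^ ((2 - γ) / 2) with hQ
  set R : ℝ := z ^ (2 - γ) with hR
  clear_value β P Q R
  clear hP2' hP3'
  -- key scalar inequality
  have key : β * (β - 1) * a z + β * b z * Q + c z * R ≤ (β * lam / 2) * (β - 1) := by
    have hneg : β * (β - 1) ≤ 0 := by nlinarith
    have h1 : β * (β - 1) * a z ≤ β * (β - 1) * lam :=
      mul_le_mul_of_nonpos_left hA1 hneg
    have h2 : β * b z * Q ≤ β * Lam * Q := by
      have hb : b z ≤ Lam := le_trans (le_abs_self _) hB
      have := mul_le_mul_of_nonneg_left hb hβ0.le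
      exact mul_le_mul_of_nonneg_right this hQpos.le
    have h3 : β * Lam * Q ≤ β * Lam * base :=
      (mul_le_mul_of_nonneg_left hQbase.le (by positivity : (0:ℝ) ≤ β * Lam))
    have h4 : β * Lam * base = β * lam * (1 - β) / 2 := by
      rw [hbase']; field_simp
    have h6 : β * (β - 1) * lam + β * lam * (1 - β) / 2 = (β * lam / 2) * (β - 1) := by
      ring
    have h5 : c z * R ≤ 0 := mul_nonpos_of_nonpos_of_nonneg hCc hRpos.le
    linarith
  have hkey2 := mul_le_mul_of_nonneg_left key (le_of_lt (mul_pos hC hPpos))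
  have hlhs : C * (β * (β - 1) * a z * P + β * b z * (P * Q) + c z * (P * R))
      = (C * P) * (β * (β - 1) * a z + β * b z * Q + c z * R) := by ring
  have hrhs : (C * (2 - γ) * α * lam / 4) * (β - 1) * P
      = (C * P) * ((β * lam / 2) * (β - 1)) := by rw [hβ]; ring
  constructor
  · rw [hP2, hP3]
    calc C * (β * (β - 1) * a z * P + β * b z * (P * Q) + c z * (P * R))
        = (C * P) * (β * (β - 1) * a z + β * b z * Q + c z * R) := hlhs
      _ ≤ (C * P) * ((β * lam / 2) * (β - 1)) := hkey2
      _ = (C * (2 - γ) * α * lam / 4) * (β - 1) * P := hrhs.symm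
  · have h1 : C * (2 - γ) * α * lam / 4 > 0 := by positivity
    have h2 : β - 1 < 0 := by linarith
    exact mul_neg_of_neg_of_pos (mul_neg_of_pos_of_neg h1 h2) hPpos
end
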